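/- Let n ≥ 2 and s ≥ 1 be integers and let a = (a_1,…,a_n) be a vector of positive integers with gcd(a_1,…,a_n) = 1. Then the s-covering radius of the simplex S_a with respect to the lattice Λ_a equals μ_s(S_a, Λ_a) = F_s(a) + a_1 + a_2 + … + a_n. -/

import Mathlib

lemma my_bezout : ∀ (k : ℕ) (f : Fin k → ℕ), ∃ c : Fin k → ℤ,
    ∑ i, c i * (f i : ℤ) = ((Finset.univ.gcd f : ℕ) : ℤ) := by
  intro k
  induction k with
  | zero => exact fun f => ⟨fun i => 0, by simp⟩
  | succ k ih =>
    intro f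
    obtain ⟨c, hc⟩ := ih (f ∘ Fin.succ)
    refine ⟨Fin.cons (Nat.gcdA (f 0) (Finset.univ.gcd (f ∘ Fin.succ)))
      (fun i => Nat.gcdB (f 0) (Finset.univ.gcd (f ∘ Fin.succ)) * c i), ?_⟩
    rw [Fin.sum_univ_succ]
    simp only [Fin.cons_zero, Fin.cons_succ]
    have h1 : ((Finset.univ.gcd f : ℕ) : ℤ)
        = ((Nat.gcd (f 0) (Finset.univ.gcd (f ∘ Fin.succ)) : ℕ) : ℤ) := by
      rw [Fin.univ_succ]
      norm_cast
      rw [Finset.gcd_def, Finset.cons_val, Multiset.map_cons, Multiset.gcd_cons,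
        Finset.map_val, Multiset.map_map, ← Finset.gcd_def]
      rfl
    rw [h1, Nat.gcd_eq_gcd_ab]
    push_cast
    rw [← hc, Finset.sum_mul]
    congr 1
    · ring
    exact Finset.sum_congr rfl fun i _ => by simp only [Function.comp]; ring


lemma my_rep_finite {n : ℕ} (a : Fin n → ℕ) (ha : ∀ i, 0 < a i) (b : ℤ) :
    {z : Fin n → ℕ | ∑ i, (a i : ℤ) * (z i : ℤ) = b}.Finite := by
  apply Set.Finite.subset (Set.finite_Icc (fun _ => 0) (fun _ => b.toNat))
  intro z hz
  simp only [Set.mem_setOf_eq] at hz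
  have hb0 : 0 ≤ b := by
    rw [← hz]
    exact Finset.sum_nonneg fun i _ => by positivity
  constructor
  · intro i; exact Nat.zero_le _
  · intro i
    have h1 : (z i : ℤ) ≤ b := by
      rw [← hz]
      calc (z i : ℤ) ≤ (a i : ℤ) * z i := by
            have := ha i
            nlinarith [Int.ofNat_le.2 (ha i), (z i).cast_nonneg (α := ℤ)]
        _ ≤ ∑ j, (a j : ℤ) * z j := by
            apply Finset.single_le_sum (fun j _ => by positivity) (Finset.mem_univ i)
    exact Int.le_toNat hb0 |>.2 h1

lemma my_exists_inj {α : Type*} {A : Set α} (hA : A.Finite) {s : ℕ} (h : s ≤ A.ncard) :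
    ∃ g : Fin s → α, Function.Injective g ∧ ∀ j, g j ∈ A := by
  classical
  have := hA.fintype
  have hc : s ≤ hA.toFinset.card := by rwa [Set.ncard_eq_toFinset_card _ hA] at h
  obtain ⟨t, hts, htc⟩ := Finset.exists_subset_card_eq hc
  refine ⟨fun j => (t.equivFin.symm (Fin.cast htc.symm j) : α), ?_, ?_⟩
  · intro j j' hjj'
    have h2 := t.equivFin.symm.injective (Subtype.ext hjj')
    simpa [Fin.ext_iff] using congrArg Fin.val h2
  · intro j
    have := (t.equivFin.symm (Fin.cast htc.symm j)).2
    exact hA.mem_toFinset.1 (hts this)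

lemma my_ncard_ge {α : Type*} {A : Set α} (hA : A.Finite) {s : ℕ} (g : Fin s → α)
    (hg : Function.Injective g) (hmem : ∀ j, g j ∈ A) : s ≤ A.ncard := by
  classical
  have := hA.fintype
  rw [Set.ncard_eq_toFinset_card _ hA]
  calc s = (Finset.univ.image g).card := by
        rw [Finset.card_image_of_injective _ hg, Finset.card_univ, Fintype.card_fin]
    _ ≤ hA.toFinset.card := by
        apply Finset.card_le_card
        intro x hx
        obtain ⟨j, _, rfl⟩ := Finset.mem_image.1 hx
        exact hA.mem_toFinset.2 (hmem j)

lemma my_helper {m s : ℕ} (hm : 1 ≤ m) (hs : 1 ≤ s) (a : Fin (m+1) → ℕ) (ha : ∀ i, 0 < a i)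
    (hgcd : Finset.univ.gcd a = 1) (F : ℤ)
    (hF : IsGreatest {b : ℤ | {z : Fin (m+1) → ℕ | ∑ i, (a i : ℤ) * (z i : ℤ) = b}.ncard < s} F)
    (μ : ℝ)
    (hμ : IsLeast {r : ℝ | 0 < r ∧ ∀ t : Fin m → ℝ,
        ∃ b : Fin s → (Fin m → ℝ), Function.Injective b ∧
          ∀ j, (∃ w : Fin m → ℤ, (∀ i, b j i = (w i : ℝ)) ∧
                  (a (Fin.last m) : ℤ) ∣ (∑ i, (a i.castSucc : ℤ) * w i)) ∧
            ∃ y : Fin m → ℝ, (∀ i, 0 ≤ y i) ∧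
              (∑ i, (a i.castSucc : ℝ) * y i) ≤ 1 ∧
              t = b j + r • y} μ) :
    μ = (F : ℝ) + ∑ i, (a i : ℝ) := by
  have han : (0:ℤ) < (a (Fin.last m) : ℤ) := by exact_mod_cast ha _
  set an : ℤ := (a (Fin.last m) : ℤ) with han_def
  set A' : ℤ := ∑ i : Fin m, (a i.castSucc : ℤ) with hA'_def
  have hA'pos : 0 < A' :=
    Finset.sum_pos (fun i _ => by exact_mod_cast ha _) ⟨⟨0, hm⟩, Finset.mem_univ _⟩
  have hFm1 : -1 ≤ F := by
    apply hF.2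
    show Set.ncard _ < s
    have he : {z : Fin (m+1) → ℕ | ∑ i, (a i : ℤ) * (z i : ℤ) = (-1 : ℤ)} = ∅ := by
      apply Set.eq_empty_iff_forall_notMem.2
      intro z hz
      have h0 : (0:ℤ) ≤ ∑ i, (a i : ℤ) * (z i : ℤ) :=
        Finset.sum_nonneg fun i _ => by positivity
      rw [Set.mem_setOf_eq] at hz
      omega
    rw [he, Set.ncard_empty]
    omega
  have hrep : ∀ b : ℤ, F < b →
      s ≤ Set.ncard {z : Fin (m+1) → ℕ | ∑ i, (a i : ℤ) * (z i : ℤ) = b} :=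
    fun b hb => le_of_not_gt fun hcon => absurd (hF.2 hcon) (not_le.2 hb)
  set r₀ : ℝ := (F:ℝ) + (A':ℝ) + (an:ℝ) with hr₀_def
  have hr₀pos : 0 < r₀ := by
    have h1 : (1:ℤ) ≤ A' := hA'pos
    have h2 : (1:ℤ) ≤ an := han
    rw [hr₀_def]
    push_cast
    have : (-1:ℝ) ≤ (F:ℝ) := by exact_mod_cast hFm1
    have h1' : (1:ℝ) ≤ (A':ℝ) := by exact_mod_cast h1
    have h2' : (1:ℝ) ≤ (an:ℝ) := by exact_mod_cast h2
    linarith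
  -- Part 1 : r₀ is in the covering set
  have hmem : 0 < r₀ ∧ ∀ t : Fin m → ℝ,
      ∃ b : Fin s → (Fin m → ℝ), Function.Injective b ∧
        ∀ j, (∃ w : Fin m → ℤ, (∀ i, b j i = (w i : ℝ)) ∧
                (a (Fin.last m) : ℤ) ∣ (∑ i, (a i.castSucc : ℤ) * w i)) ∧
          ∃ y : Fin m → ℝ, (∀ i, 0 ≤ y i) ∧
            (∑ i, (a i.castSucc : ℝ) * y i) ≤ 1 ∧
            t = b j + r₀ • y := by
    refine ⟨hr₀pos, fun t => ?_⟩
    set u : Fin m → ℤ := fun i => ⌊t i⌋ with hu_def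
    set c : ℤ := ∑ i, (a i.castSucc : ℤ) * u i with hc_def
    set b : ℤ := F + an - (F + an - c) % an with hb_def
    have hmod1 : 0 ≤ (F + an - c) % an := Int.emod_nonneg _ (ne_of_gt han)
    have hmod2 : (F + an - c) % an < an := Int.emod_lt_of_pos _ han
    have hdvd_bc : an ∣ b - c := by
      have hx := Int.mul_ediv_add_emod (F + an - c) an
      exact ⟨(F + an - c) / an, by omega⟩
    have hFb : F < b := by omega
    have hbF : b ≤ F + an := by omega
    obtain ⟨g, hginj, hgmem⟩ := my_exists_inj (my_rep_finite a ha b) (hrep b hFb)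
    have hgsum : ∀ j, ∑ i : Fin (m+1), (a i : ℤ) * g j i = b := fun j => hgmem j
    have hgsplit : ∀ j, ∑ i : Fin m, (a i.castSucc : ℤ) * g j i.castSucc
        = b - an * g j (Fin.last m) := by
      intro j
      have h1 := hgsum j
      rw [Fin.sum_univ_castSucc, ← han_def] at h1
      omega
    refine ⟨fun j i => ((u i - (g j i.castSucc : ℤ) : ℤ) : ℝ), ?_, ?_⟩
    · intro j j' hjj'
      apply hginj
      have hcomp : ∀ i : Fin m, g j i.castSucc = g j' i.castSucc := by
        intro i
        have h2 := congrFun hjj' i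
        have h3 : ((u i - (g j i.castSucc : ℤ) : ℤ) : ℝ)
            = ((u i - (g j' i.castSucc : ℤ) : ℤ) : ℝ) := h2
        have h4 : (u i - (g j i.castSucc : ℤ)) = (u i - (g j' i.castSucc : ℤ)) := by
          exact_mod_cast h3
        omega
      have hlast : g j (Fin.last m) = g j' (Fin.last m) := by
        have e1 := hgsplit j
        have e2 := hgsplit j'
        rw [Finset.sum_congr rfl fun i _ => by rw [hcomp i]] at e1
        have h4 : an * (g j (Fin.last m) : ℤ) = an * (g j' (Fin.last m) : ℤ) := by omega
        have h5 := mul_left_cancel₀ (ne_of_gt han) h4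
        exact_mod_cast h5
      funext i
      exact Fin.lastCases hlast hcomp i
    · intro j
      constructor
      · refine ⟨fun i => u i - g j i.castSucc, fun i => rfl, ?_⟩
        have hsp : ∑ i : Fin m, (a i.castSucc : ℤ) * (u i - (g j i.castSucc : ℤ))
            = -(b - c) + an * g j (Fin.last m) := by
          have : ∑ i : Fin m, (a i.castSucc : ℤ) * (u i - (g j i.castSucc : ℤ))
              = (∑ i : Fin m, (a i.castSucc : ℤ) * u i)
                - ∑ i : Fin m, (a i.castSucc : ℤ) * (g j i.castSucc : ℤ) := by
            rw [← Finset.sum_sub_distrib]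
            exact Finset.sum_congr rfl fun i _ => by ring
          rw [this, hgsplit j, ← hc_def]
          ring
        rw [hsp]
        exact dvd_add ((dvd_neg).2 hdvd_bc) (Dvd.intro _ rfl)
      · refine ⟨fun i => (t i - ((u i - (g j i.castSucc : ℤ) : ℤ) : ℝ)) / r₀, ?_, ?_, ?_⟩
        · intro i
          apply div_nonneg _ hr₀pos.le
          have h1 : (u i : ℝ) ≤ t i := Int.floor_le _
          have h2 : (0:ℝ) ≤ ((g j i.castSucc : ℕ) : ℝ) := Nat.cast_nonneg _
          push_cast
          linarith
        · have hkey : ∑ i, (a i.castSucc : ℝ) * (t i - ((u i - (g j i.castSucc : ℤ) : ℤ) : ℝ))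
              < r₀ := by
            have hsplit2 : ∑ i, (a i.castSucc : ℝ) * (t i - ((u i - (g j i.castSucc : ℤ) : ℤ) : ℝ))
                = (∑ i, (a i.castSucc : ℝ) * (t i - (u i : ℝ)))
                  + ((∑ i : Fin m, (a i.castSucc : ℤ) * (g j i.castSucc : ℤ) : ℤ) : ℝ) := by
              push_cast
              rw [← Finset.sum_add_distrib]
              exact Finset.sum_congr rfl fun i _ => by ring
            have hsum1 : ∑ i, (a i.castSucc : ℝ) * (t i - (u i : ℝ)) < (A' : ℝ) := by
              have : (A' : ℝ) = ∑ i : Fin m, ((a i.castSucc : ℕ) : ℝ) := by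
                rw [hA'_def]; push_cast; rfl
              rw [this]
              apply Finset.sum_lt_sum_of_nonempty ⟨⟨0, hm⟩, Finset.mem_univ _⟩
              intro i _
              have hfrac : t i - (u i : ℝ) < 1 := by
                have := Int.lt_floor_add_one (t i); simp only [hu_def]; linarith
              have hap : (0:ℝ) < ((a i.castSucc : ℕ) : ℝ) := by exact_mod_cast ha _
              nlinarith
            have hsum2 : ((∑ i : Fin m, (a i.castSucc : ℤ) * (g j i.castSucc : ℤ) : ℤ) : ℝ)
                ≤ ((F + an : ℤ) : ℝ) := by
              have h6 := hgsplit j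
              have h7 : (0:ℤ) ≤ an * g j (Fin.last m) := by positivity
              have h8 : (∑ i : Fin m, (a i.castSucc : ℤ) * (g j i.castSucc : ℤ)) ≤ F + an := by
                omega
              exact_mod_cast h8
            rw [hsplit2, hr₀_def]
            push_cast at hsum2 ⊢
            linarith
          show ∑ i, (a i.castSucc : ℝ)
              * ((t i - ((u i - (g j i.castSucc : ℤ) : ℤ) : ℝ)) / r₀) ≤ 1
          rw [Finset.sum_congr rfl (fun (i : Fin m) _ => by
            ring_nf :
            ∀ i ∈ Finset.univ, (a i.castSucc : ℝ)
              * ((t i - ((u i - (g j i.castSucc : ℤ) : ℤ) : ℝ)) / r₀)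
            = ((a i.castSucc : ℝ) * (t i - ((u i - (g j i.castSucc : ℤ) : ℤ) : ℝ))) / r₀),
            ← Finset.sum_div, div_le_one hr₀pos]
          exact le_of_lt hkey
        · funext i
          show t i = ((u i - (g j i.castSucc : ℤ) : ℤ) : ℝ)
              + r₀ * ((t i - ((u i - (g j i.castSucc : ℤ) : ℤ) : ℝ)) / r₀)
          rw [mul_div_cancel₀ _ (ne_of_gt hr₀pos)]
          ring
  obtain ⟨hμpos, hcov⟩ := hμ.1
  have hle : μ ≤ r₀ := hμ.2 hmem
  have hge : r₀ ≤ μ := by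
    by_contra hcon
    push_neg at hcon
    obtain ⟨cb, hcb⟩ := my_bezout (m+1) a
    rw [hgcd] at hcb
    norm_num at hcb
    set u : Fin m → ℤ := fun i => F * cb i.castSucc with hu_def
    have hcb2 : ∑ i : Fin m, cb i.castSucc * (a i.castSucc : ℤ)
        + cb (Fin.last m) * an = 1 := by
      rw [Fin.sum_univ_castSucc] at hcb
      exact hcb
    have humod : an ∣ (∑ i : Fin m, (a i.castSucc : ℤ) * u i) - F := by
      refine ⟨-(F * cb (Fin.last m)), ?_⟩
      have h2 : ∑ i : Fin m, (a i.castSucc : ℤ) * u i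
          = F * ∑ i : Fin m, cb i.castSucc * (a i.castSucc : ℤ) := by
        rw [Finset.mul_sum]
        exact Finset.sum_congr rfl fun i _ => by rw [hu_def]; ring
      rw [h2, show (∑ i : Fin m, cb i.castSucc * (a i.castSucc : ℤ))
        = 1 - cb (Fin.last m) * an from by linarith [hcb2]]
      ring
    have hA'R : (0:ℝ) < (A':ℝ) := by exact_mod_cast hA'pos
    set ε : ℝ := min (1/2) ((r₀ - μ) / (2 * (A':ℝ))) with hε_def
    have hε0 : 0 < ε := lt_min (by norm_num) (div_pos (by linarith) (by positivity))
    have hε2 : ε * (A':ℝ) ≤ (r₀ - μ)/2 := by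
      have h3 : ε ≤ (r₀ - μ)/(2*(A':ℝ)) := min_le_right _ _
      calc ε * (A':ℝ) ≤ ((r₀-μ)/(2*(A':ℝ))) * (A':ℝ) :=
            mul_le_mul_of_nonneg_right h3 hA'R.le
        _ = (r₀ - μ)/2 := by field_simp
    obtain ⟨bf, hbinj, hprops⟩ := hcov (fun i => (u i : ℝ) + 1 - ε)
    choose w hbw hdvd using fun j => (hprops j).1
    choose y hy0 hy1 hty using fun j => (hprops j).2
    have hty' : ∀ j i, (u i : ℝ) + 1 - ε = (w j i : ℝ) + μ * y j i := by
      intro j i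
      have h4 := congrFun (hty j) i
      simpa [hbw j i] using h4
    have hw_le : ∀ j i, w j i ≤ u i := by
      intro j i
      have e2 : (w j i : ℝ) < (u i : ℝ) + 1 := by
        have h5 := hty' j i
        have h6 : 0 ≤ μ * y j i := mul_nonneg hμpos.le (hy0 j i)
        linarith
      have : w j i < u i + 1 := by exact_mod_cast e2
      omega
    set D : Fin s → ℤ := fun j => ∑ i : Fin m, (a i.castSucc : ℤ) * (u i - w j i)
      with hD_def
    have hDreal : ∀ j, (D j : ℝ) ≤ μ - (1-ε) * (A':ℝ) := by
      intro j
      have e1 : ∀ i : Fin m, ((u i : ℤ):ℝ) - ((w j i : ℤ):ℝ) = μ * y j i - (1-ε) := by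
        intro i; have := hty' j i; linarith
      have e2 : (D j : ℝ) = μ * (∑ i : Fin m, (a i.castSucc:ℝ) * y j i) - (1-ε) * (A':ℝ) := by
        have e2a : (D j : ℝ)
            = ∑ i : Fin m, ((a i.castSucc : ℕ):ℝ) * (((u i:ℤ):ℝ) - ((w j i:ℤ):ℝ)) := by
          show ((∑ i : Fin m, (a i.castSucc : ℤ) * (u i - w j i) : ℤ) : ℝ) = _
          push_cast
          rfl
        have hA'cast : ((A':ℤ):ℝ) = ∑ i : Fin m, ((a i.castSucc : ℕ):ℝ) := by
          rw [hA'_def]; push_cast; rfl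
        rw [e2a, Finset.sum_congr rfl fun i _ => by rw [e1 i], hA'cast,
          Finset.mul_sum, Finset.mul_sum, ← Finset.sum_sub_distrib]
        exact Finset.sum_congr rfl fun i _ => by ring
      have e3 : μ * (∑ i : Fin m, (a i.castSucc:ℝ) * y j i) ≤ μ :=
        (mul_le_of_le_one_right hμpos.le (hy1 j))
      linarith
    have hDltF : ∀ j, D j < F + an := by
      intro j
      have h7 : (D j : ℝ) < ((F + an : ℤ) : ℝ) := by
        have h8 := hDreal j
        have h9 := hε2
        push_cast
        rw [hr₀_def] at h9 hcon
        nlinarith [hA'R, hε0]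
      exact_mod_cast h7
    have hDmodF : ∀ j, an ∣ F - D j := by
      intro j
      have h10 : F - D j = -((∑ i : Fin m, (a i.castSucc:ℤ) * u i) - F)
          + ∑ i : Fin m, (a i.castSucc:ℤ) * w j i := by
        show F - (∑ i : Fin m, (a i.castSucc : ℤ) * (u i - w j i)) = _
        have : ∑ i : Fin m, (a i.castSucc : ℤ) * (u i - w j i)
            = (∑ i : Fin m, (a i.castSucc : ℤ) * u i)
              - ∑ i : Fin m, (a i.castSucc : ℤ) * w j i := by
          rw [← Finset.sum_sub_distrib]
          exact Finset.sum_congr rfl fun i _ => by ring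
        rw [this]
        ring
      rw [h10]
      exact dvd_add ((dvd_neg).2 humod) (hdvd j)
    have hDleF : ∀ j, D j ≤ F := by
      intro j
      obtain ⟨k, hk⟩ := hDmodF j
      have h11 := hDltF j
      have h12 : an * (-1) < an * k := by linarith
      have h13 : (-1:ℤ) < k := (mul_lt_mul_iff_right₀ han).mp h12
      nlinarith
    set z : Fin s → Fin (m+1) → ℕ :=
      fun j => Fin.snoc (fun i => (u i - w j i).toNat) ((F - D j)/an).toNat with hz_def
    have hz1 : ∀ j (i : Fin m), z j i.castSucc = (u i - w j i).toNat := by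
      intro j i
      rw [hz_def]
      exact Fin.snoc_castSucc _ _ _
    have hz2 : ∀ j, z j (Fin.last m) = ((F - D j)/an).toNat := by
      intro j
      rw [hz_def]
      exact Fin.snoc_last _ _
    have hzmem : ∀ j, ∑ i : Fin (m+1), (a i : ℤ) * z j i = F := by
      intro j
      rw [Fin.sum_univ_castSucc, ← han_def]
      have e4 : ∑ i : Fin m, (a i.castSucc : ℤ) * (z j i.castSucc : ℤ) = D j := by
        show _ = ∑ i : Fin m, (a i.castSucc : ℤ) * (u i - w j i)
        refine Finset.sum_congr rfl fun i _ => ?_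
        rw [hz1 j i]
        congr 1
        exact Int.toNat_of_nonneg (by have := hw_le j i; omega)
      have e5 : (z j (Fin.last m) : ℤ) = (F - D j)/an := by
        rw [hz2 j]
        exact Int.toNat_of_nonneg (Int.ediv_nonneg (by have := hDleF j; omega) han.le)
      rw [e4, e5, Int.mul_ediv_cancel' (hDmodF j)]
      ring
    have hzinj : Function.Injective z := by
      intro j j' hjj'
      apply hbinj
      funext i
      rw [hbw j i, hbw j' i]
      have h14 : z j i.castSucc = z j' i.castSucc := congrFun hjj' _
      rw [hz1 j i, hz1 j' i] at h14
      have h15 : w j i = w j' i := by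
        have h16 := hw_le j i
        have h17 := hw_le j' i
        omega
      exact_mod_cast h15
    have h18 : s ≤ Set.ncard {z : Fin (m+1) → ℕ | ∑ i, (a i : ℤ) * (z i : ℤ) = F} :=
      my_ncard_ge (my_rep_finite a ha F) z hzinj (fun j => hzmem j)
    exact absurd hF.1 (not_lt.2 h18)
  have hμr₀ : μ = r₀ := le_antisymm hle hge
  rw [hμr₀, hr₀_def, hA'_def, han_def, Fin.sum_univ_castSucc (f := fun i => ((a i : ℕ) : ℝ))]
  push_cast
  ring


/-- **The s-covering radius of Kannan's simplex equals the s-Frobenius number shifted**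
(Theorem 2 in Aliev–Fukshansky–Henk, generalizing Kannan's theorem). Let `a` be a
primitive vector of positive integers, `F` its `s`-Frobenius number,
`S_a = {x ∈ ℝ^{n-1} : x ≥ 0, ∑ aᵢ xᵢ ≤ 1}` and
`Λ_a = {w ∈ ℤ^{n-1} : aₙ ∣ ∑ aᵢ wᵢ}` (viewed inside `ℝ^{n-1}`). If `μ` is the
`s`-covering radius of `S_a` with respect to `Λ_a`, i.e. the least `μ > 0` such that
every `t ∈ ℝ^{n-1}` lies in at least `s` distinct lattice translates of `μ S_a`, then
`μ = F + a₁ + ⋯ + aₙ`. -/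
theorem sCoveringRadius_simplex_eq_sFrobenius_add {n s : ℕ} (hn : 2 ≤ n) (hs : 1 ≤ s)
    (a : Fin n → ℕ) (ha : ∀ i, 0 < a i) (hgcd : Finset.univ.gcd a = 1)
    (F : ℤ)
    (hF : IsGreatest
      {b : ℤ | {z : Fin n → ℕ | ∑ i, (a i : ℤ) * (z i : ℤ) = b}.ncard < s} F)
    (μ : ℝ)
    (hμ : IsLeast {r : ℝ | 0 < r ∧ ∀ t : Fin (n - 1) → ℝ,
        ∃ b : Fin s → (Fin (n - 1) → ℝ), Function.Injective b ∧
          ∀ j, (∃ w : Fin (n - 1) → ℤ, (∀ i, b j i = (w i : ℝ)) ∧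
                  (a ⟨n - 1, by omega⟩ : ℤ) ∣
                    (∑ i, (a (Fin.castLE (n.sub_le 1) i) : ℤ) * w i)) ∧
            ∃ y : Fin (n - 1) → ℝ, (∀ i, 0 ≤ y i) ∧
              (∑ i, (a (Fin.castLE (n.sub_le 1) i) : ℝ) * y i) ≤ 1 ∧
              t = b j + r • y} μ) :
    μ = (F : ℝ) + ∑ i, (a i : ℝ) := by
  obtain ⟨m, rfl⟩ : ∃ m, n = m + 1 := ⟨n - 1, by omega⟩
  exact my_helper (by omega) hs a ha hgcd F hF μ hμ
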